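/- arXiv:2312.10526 — 3 statements merged into one kernel-verified Lean document; each statement's English description precedes it below -/
import Mathlib

section
/- Let C₀, C₁, C₂ be real numbers with |C₂| < 1, and let (Qₙ) be a sequence in [0,1] converging to some limit Q∞ ∈ [0,1]. Define the sequence (xₙ) by x₀ = C₀ + C₁ and x_{n+1} = C₀ + C₁ Qₙ + C₂ (1 - Qₙ) xₙ. Then (xₙ) converges, and its limit x∞ satisfies x∞ = (C₀ + C₁ Q∞) / (1 - C₂ (1 - Q∞)). -/
open Filter

lemma aux_tendsto_zero (u c : ℕ → ℝ) (r : ℝ) (hr0 : 0 ≤ r) (hr1 : r < 1)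
    (hc : Tendsto c atTop (nhds 0))
    (h : ∀ n, |u (n + 1)| ≤ r * |u n| + c n) :
    Tendsto u atTop (nhds 0) := by
  rw [Metric.tendsto_atTop]
  intro ε hε
  have hδ : 0 < ε * (1 - r) / 2 := by
    have : 0 < 1 - r := by linarith
    positivity
  obtain ⟨N, hN⟩ := Metric.tendsto_atTop.mp hc (ε * (1 - r) / 2) hδ
  have key : ∀ k, |u (N + k)| ≤ r ^ k * |u N| + ε / 2 := by
    intro k
    induction k with
    | zero => simp; linarith
    | succ k ih =>
      have h1 := h (N + k)
      have h2 : c (N + k) ≤ ε * (1 - r) / 2 := by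
        have := hN (N + k) (by omega)
        rw [Real.dist_eq, sub_zero] at this
        exact le_of_lt (lt_of_le_of_lt (le_abs_self _) this)
      have h3 : r * |u (N + k)| ≤ r * (r ^ k * |u N| + ε / 2) :=
        mul_le_mul_of_nonneg_left ih hr0
      have : N + (k + 1) = (N + k) + 1 := by omega
      rw [this]
      calc |u ((N + k) + 1)| ≤ r * |u (N + k)| + c (N + k) := h1
        _ ≤ r * (r ^ k * |u N| + ε / 2) + ε * (1 - r) / 2 := by linarith
        _ = r ^ (k + 1) * |u N| + ε / 2 := by ring
  have hpow : Tendsto (fun k => r ^ k * |u N|) atTop (nhds 0) := by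
    simpa using (tendsto_pow_atTop_nhds_zero_of_lt_one hr0 hr1).mul_const |u N|
  obtain ⟨k₀, hk₀⟩ := Metric.tendsto_atTop.mp hpow (ε / 2) (by linarith)
  refine ⟨N + k₀, fun n hn => ?_⟩
  have h4 : |u n| ≤ r ^ (n - N) * |u N| + ε / 2 := by
    have := key (n - N)
    rwa [show N + (n - N) = n by omega] at this
  have h5 : r ^ (n - N) * |u N| ≤ r ^ k₀ * |u N| :=
    mul_le_mul_of_nonneg_right (pow_le_pow_of_le_one hr0 hr1.le (by omega)) (abs_nonneg _)
  have h6 : r ^ k₀ * |u N| < ε / 2 := by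
    have := hk₀ k₀ le_rfl
    rw [Real.dist_eq, sub_zero] at this
    exact lt_of_le_of_lt (le_abs_self _) this
  rw [Real.dist_eq, sub_zero]
  calc |u n| ≤ r ^ (n - N) * |u N| + ε / 2 := h4
    _ ≤ r ^ k₀ * |u N| + ε / 2 := by linarith
    _ < ε := by linarith

theorem stmt_0 (C₀ C₁ C₂ : ℝ) (hC₂ : |C₂| < 1)
    (Q : ℕ → ℝ) (hQ : ∀ n, Q n ∈ Set.Icc (0:ℝ) 1)
    (Qinf : ℝ) (hQinf : Qinf ∈ Set.Icc (0:ℝ) 1)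
    (hQconv : Tendsto Q atTop (nhds Qinf))
    (x : ℕ → ℝ) (hx0 : x 0 = C₀ + C₁)
    (hxrec : ∀ n, x (n + 1) = C₀ + C₁ * Q n + C₂ * (1 - Q n) * x n) :
    Tendsto x atTop (nhds ((C₀ + C₁ * Qinf) / (1 - C₂ * (1 - Qinf)))) := by
  set L : ℝ := (C₀ + C₁ * Qinf) / (1 - C₂ * (1 - Qinf)) with hL
  have hQi := hQinf
  obtain ⟨hQi0, hQi1⟩ := hQi
  have habs : |C₂ * (1 - Qinf)| < 1 := by
    rw [abs_mul]
    calc |C₂| * |1 - Qinf| ≤ |C₂| * 1 := by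
          apply mul_le_mul_of_nonneg_left _ (abs_nonneg _)
          rw [abs_le]; constructor <;> linarith
      _ < 1 := by rwa [mul_one]
  have hden : 1 - C₂ * (1 - Qinf) ≠ 0 := by
    intro hcon
    have : C₂ * (1 - Qinf) = 1 := by linarith
    rw [this] at habs; norm_num at habs
  have hLid : L = C₀ + C₁ * Qinf + C₂ * (1 - Qinf) * L := by
    have h' : L * (1 - C₂ * (1 - Qinf)) = C₀ + C₁ * Qinf := by rw [hL]; exact div_mul_cancel₀ _ hden
    linear_combination h'
  set u : ℕ → ℝ := fun n => x n - L with hu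
  set c : ℕ → ℝ := fun n => |C₁ * (Q n - Qinf)| + |C₂ * (Qinf - Q n)| * |L| with hcdef
  have hc : Tendsto c atTop (nhds 0) := by
    have h1 : Tendsto (fun n => Q n - Qinf) atTop (nhds 0) := by
      simpa using hQconv.sub_const Qinf
    have h2 : Tendsto (fun n => |C₁ * (Q n - Qinf)|) atTop (nhds 0) := by
      have := (h1.const_mul C₁).abs
      simpa using this
    have h3 : Tendsto (fun n => |C₂ * (Qinf - Q n)| * |L|) atTop (nhds 0) := by
      have h1' : Tendsto (fun n => Qinf - Q n) atTop (nhds 0) := by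
        simpa using (tendsto_const_nhds.sub hQconv : Tendsto (fun n => Qinf - Q n) atTop (nhds (Qinf - Qinf)))
      have := ((h1'.const_mul C₂).abs).mul_const |L|
      simpa using this
    simpa only [add_zero] using h2.add h3
  have hrec : ∀ n, |u (n + 1)| ≤ |C₂| * |u n| + c n := by
    intro n
    obtain ⟨hq0, hq1⟩ := hQ n
    have hid : u (n + 1) = C₁ * (Q n - Qinf) + C₂ * (1 - Q n) * u n + C₂ * (Qinf - Q n) * L := by
      simp only [hu, hxrec n]
      nth_rewrite 1 [hLid]
      ring
    calc |u (n + 1)| ≤ |C₁ * (Q n - Qinf)| + |C₂ * (1 - Q n) * u n| + |C₂ * (Qinf - Q n) * L| := by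
          rw [hid]; exact (abs_add_le _ _).trans (by gcongr; exact abs_add_le _ _)
      _ ≤ |C₂| * |u n| + c n := by
          simp only [hcdef, abs_mul]
          have hb : |1 - Q n| ≤ 1 := by rw [abs_le]; constructor <;> linarith
          have : |C₂| * |1 - Q n| * |u n| ≤ |C₂| * 1 * |u n| := by
            gcongr
          nlinarith [abs_nonneg (u n), abs_nonneg C₂]
  have hmain : Tendsto u atTop (nhds 0) :=
    aux_tendsto_zero u c |C₂| (abs_nonneg _) hC₂ hc hrec
  have := hmain.add_const L
  simpa [hu] using this
end

section
/- Fix T > 0, q ∈ ℝ and x₀ ∈ ℝ. Consider the ODE system on [0,T]: η̇ₜ = ηₜ² - 1 with terminal condition η_T = (1-q)², and Ẋ̄ₜ = -ηₜ X̄ₜ with X̄₀ = x₀. Then the terminal value satisfies X̄_T = 2x₀ / (e^T (1 + (1-q)²) + e^{-T} (1 - (1-q)²)), provided the denominator is nonzero. -/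
open Set Real

theorem stmt_3 (T q x₀ : ℝ) (hT : 0 < T)
    (η X : ℝ → ℝ)
    (hη : ∀ t ∈ Set.Icc (0:ℝ) T, HasDerivAt η (η t ^ 2 - 1) t)
    (hηT : η T = (1 - q) ^ 2)
    (hX : ∀ t ∈ Set.Icc (0:ℝ) T, HasDerivAt X (-(η t * X t)) t)
    (hX0 : X 0 = x₀)
    (hden : Real.exp T * (1 + (1 - q) ^ 2) + Real.exp (-T) * (1 - (1 - q) ^ 2) ≠ 0) :
    X T = 2 * x₀ /
      (Real.exp T * (1 + (1 - q) ^ 2) + Real.exp (-T) * (1 - (1 - q) ^ 2)) := by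
  set c : ℝ := (1 - q) ^ 2 with hc
  set D : ℝ := Real.exp T * (1 + c) + Real.exp (-T) * (1 - c) with hD
  set φ : ℝ → ℝ := fun t => Real.cosh (T - t) + c * Real.sinh (T - t) with hφ
  set φ' : ℝ → ℝ := fun t => -Real.sinh (T - t) - c * Real.cosh (T - t) with hφ'
  have hts : ∀ t : ℝ, HasDerivAt (fun t : ℝ => T - t) (-1) t := fun t => by
    simpa using (hasDerivAt_id t).const_sub T
  have hφd : ∀ t, HasDerivAt φ (φ' t) t := by
    intro t
    have h2 := (Real.hasDerivAt_cosh (T - t)).comp t (hts t)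
    have h3 := ((Real.hasDerivAt_sinh (T - t)).comp t (hts t)).const_mul c
    refine (h2.add h3).congr_deriv ?_
    simp only [hφ']; ring
  have hφ'd : ∀ t, HasDerivAt φ' (φ t) t := by
    intro t
    have h2 := ((Real.hasDerivAt_sinh (T - t)).comp t (hts t)).neg
    have h3 := ((Real.hasDerivAt_cosh (T - t)).comp t (hts t)).const_mul c
    refine (h2.sub h3).congr_deriv ?_
    simp only [hφ]; ring
  have hφT : φ T = 1 := by simp [hφ]
  have hφ'T : φ' T = -c := by simp [hφ']
  have hφ0 : φ 0 = D / 2 := by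
    simp only [hφ, sub_zero, Real.cosh_eq, Real.sinh_eq, hD]
    ring
  have hD0 : φ 0 ≠ 0 := by rw [hφ0]; exact div_ne_zero hden two_ne_zero
  -- bound on η on the compact interval
  obtain ⟨M, hM⟩ : ∃ M : ℝ, ∀ t ∈ Icc (0:ℝ) T, |η t| ≤ M := by
    have hcont : ContinuousOn η (Icc 0 T) := fun t ht =>
      (hη t ht).continuousAt.continuousWithinAt
    obtain ⟨M, hM⟩ := (isCompact_Icc).exists_bound_of_continuousOn hcont
    exact ⟨M, fun t ht => by simpa using hM t ht⟩
  set K : NNReal := M.toNNReal with hK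
  -- clamped coefficient, globally bounded by K
  set proj : ℝ → ℝ := fun t => max 0 (min t T) with hproj
  have hprojmem : ∀ t, proj t ∈ Icc (0:ℝ) T := fun t =>
    ⟨le_max_left _ _, max_le hT.le (min_le_right _ _)⟩
  have hprojeq : ∀ t ∈ Icc (0:ℝ) T, proj t = t := fun t ht => by
    simp [hproj, min_eq_left ht.2, max_eq_right ht.1]
  set ηc : ℝ → ℝ := fun t => η (proj t) with hηc
  have hηcK : ∀ t, |ηc t| ≤ (K : ℝ) := fun t =>
    le_trans (hM _ (hprojmem t)) (Real.le_coe_toNNReal M)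
  have hlip : ∀ a : ℝ, |a| ≤ (K : ℝ) → LipschitzWith K (fun y : ℝ => a * y) := by
    intro a ha
    refine LipschitzWith.of_dist_le_mul fun y z => ?_
    rw [Real.dist_eq, Real.dist_eq, ← mul_sub, abs_mul]
    exact mul_le_mul_of_nonneg_right ha (abs_nonneg _)
  -- Step A: ψ := η φ + φ' vanishes on [0, T]
  set ψ : ℝ → ℝ := fun t => η t * φ t + φ' t with hψ
  have hψT : ψ T = 0 := by simp [hψ, hηT, hφT, hφ'T, ← hc]
  have hψd : ∀ t ∈ Icc (0:ℝ) T, HasDerivAt ψ (η t * ψ t) t := by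
    intro t ht
    have := ((hη t ht).mul (hφd t)).add (hφ'd t)
    refine this.congr_deriv ?_
    simp only [hψ]; ring
  set v₁ : ℝ → ℝ → ℝ := fun t y => ηc t * y with hv₁
  have hv₁lip : ∀ t, LipschitzOnWith K (v₁ t) univ := fun t =>
    ((hlip _ (hηcK t))).lipschitzOnWith
  have hψ0 : EqOn ψ (fun _ => (0:ℝ)) (Icc 0 T) := by
    apply ODE_solution_unique_of_mem_Icc_left (v := v₁) (s := fun _ => univ) (fun t _ => hv₁lip t)
    · exact fun t ht => (hψd t ht).continuousAt.continuousWithinAt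
    · intro t ht
      have ht' : t ∈ Icc (0:ℝ) T := ⟨ht.1.le, ht.2⟩
      have he : ηc t = η t := by simp only [hηc]; rw [hprojeq t ht']
      have := (hψd t ht').hasDerivWithinAt (s := Iic t)
      simpa [hv₁, he] using this
    · exact fun t _ => mem_univ _
    · exact continuousOn_const
    · intro t ht
      simpa [hv₁] using (hasDerivAt_const t (0:ℝ)).hasDerivWithinAt (s := Iic t)
    · exact fun t _ => mem_univ _
    · simpa using hψT
  -- hence φ solves φ' = -η φ on [0,T]
  have hφode : ∀ t ∈ Icc (0:ℝ) T, HasDerivAt φ (-(η t * φ t)) t := by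
    intro t ht
    have h0 : ψ t = 0 := hψ0 ht
    have : φ' t = -(η t * φ t) := by
      have := h0
      simp only [hψ] at this
      linarith
    exact this ▸ hφd t
  -- Step B: X agrees with (x₀ / φ 0) * φ
  set Y : ℝ → ℝ := fun t => (x₀ / φ 0) * φ t with hY
  set v₂ : ℝ → ℝ → ℝ := fun t y => -(ηc t * y) with hv₂
  have hv₂lip : ∀ t, LipschitzOnWith K (v₂ t) univ := by
    intro t
    have := (hlip _ (hηcK t)).neg
    refine this.lipschitzOnWith.mono (subset_refl _) |>.mono (subset_refl _) |>.mono (subset_refl _)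
  have hXY : EqOn X Y (Icc 0 T) := by
    apply ODE_solution_unique_of_mem_Icc_right (v := v₂) (s := fun _ => univ) (fun t _ => hv₂lip t)
    · exact fun t ht => (hX t ht).continuousAt.continuousWithinAt
    · intro t ht
      have ht' : t ∈ Icc (0:ℝ) T := ⟨ht.1, ht.2.le⟩
      have he : ηc t = η t := by simp only [hηc]; rw [hprojeq t ht']
      have := (hX t ht').hasDerivWithinAt (s := Ici t)
      simpa [hv₂, he] using this
    · exact fun t _ => mem_univ _
    · exact fun t ht => ((hφd t).const_mul _).continuousAt.continuousWithinAt
    · intro t ht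
      have ht' : t ∈ Icc (0:ℝ) T := ⟨ht.1, ht.2.le⟩
      have he : ηc t = η t := by simp only [hηc]; rw [hprojeq t ht']
      have := ((hφode t ht').const_mul (x₀ / φ 0)).hasDerivWithinAt (s := Ici t)
      simp only [hv₂, hY, he]
      convert this using 1
      ring
    · exact fun t _ => mem_univ _
    · simp [hY, hX0, div_mul_cancel₀]
      field_simp
  have hXT : X T = Y T := hXY ⟨hT.le, le_refl T⟩
  rw [hXT]
  simp only [hY, hφT, hφ0, mul_one]
  rw [div_div_eq_mul_div]
  ring_nf
end

section
/- Let A be a set of controls, M a convex subset of a real vector space, and Φ : A → M. Let J(α; μ) = K(α) + F(α; μ) where F(α; ·) : M → ℝ is concave for every α. Fix p ∈ [0,1] and a reference point m ∈ M. Suppose α* minimizes β ↦ J(β; m) over A, with minimal value Ĵ₀, suppose α^p minimizes β ↦ J(β; p Φ(β-population) + (1-p) m) in the equilibrium sense (i.e., α^p minimizes β ↦ J(β; p Φ(α^p) + (1-p) m)), with value Ĵ_p, and suppose J* ≤ K(α^p) + F(α^p; Φ(α^p)) where J* is the social optimum value inf_β (K(β) + F(β; Φ(β))). Then Ĵ_p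 ≥ p J* + (1-p) Ĵ₀ ≥ Ĵ₀ (using J* ≥ Ĵ₀). -/
theorem stmt_9 {A V : Type*} [AddCommGroup V] [Module ℝ V]
    (Mset : Set V) (hM : Convex ℝ Mset)
    (Φ : A → V) (hΦ : ∀ β, Φ β ∈ Mset)
    (K : A → ℝ) (F : A → V → ℝ)
    (hF : ∀ α, ConcaveOn ℝ Mset (F α))
    (p : ℝ) (hp : p ∈ Set.Icc (0:ℝ) 1)
    (m : V) (hm : m ∈ Mset)
    (αstar αp : A) (J0 Jp Jstar : ℝ)
    (hJ0 : J0 = K αstar + F αstar m)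
    (hαstar : ∀ β, J0 ≤ K β + F β m)
    (hJp : Jp = K αp + F αp (p • Φ αp + (1 - p) • m))
    (hαp : ∀ β, Jp ≤ K β + F β (p • Φ αp + (1 - p) • m))
    (hJstarle : Jstar ≤ K αp + F αp (Φ αp))
    (hJstarge : J0 ≤ Jstar) :
    p * Jstar + (1 - p) * J0 ≤ Jp ∧ J0 ≤ p * Jstar + (1 - p) * J0 := by
  obtain ⟨hp0, hp1⟩ := hp
  have hconc : p • F αp (Φ αp) + (1 - p) • F αp m ≤ F αp (p • Φ αp + (1 - p) • m) :=
    (hF αp).2 (hΦ αp) hm hp0 (by linarith) (by ring)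
  have h1 : p * Jstar ≤ p * (K αp + F αp (Φ αp)) :=
    mul_le_mul_of_nonneg_left hJstarle hp0
  have h2 : (1 - p) * J0 ≤ (1 - p) * (K αp + F αp m) :=
    mul_le_mul_of_nonneg_left (hαstar αp) (by linarith)
  constructor
  · simp only [smul_eq_mul] at hconc
    rw [hJp]; nlinarith [hconc]
  · nlinarith
end
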